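/- For every positive integer n, ℓ(n) ≤ 2n², where ℓ(n) := lcm(n, z(n)). -/

import Mathlib

/-- The rank of appearance (entry point) of `m` in the Fibonacci sequence. -/
noncomputable def fibZ (m : ℕ) : ℕ := sInf {n | 0 < n ∧ m ∣ Nat.fib n}

/-- `ℓ(m) = lcm(m, z(m))`. -/
noncomputable def ellF (m : ℕ) : ℕ := Nat.lcm m (fibZ m)



open Nat

lemma exists_fib_dvd (n : ℕ) (hn : 0 < n) : ∃ m, 0 < m ∧ n ∣ Nat.fib m := by
  haveI : NeZero n := ⟨hn.ne'⟩
  set g : ℕ → ZMod n × ZMod n := fun k => ((Nat.fib k : ZMod n), (Nat.fib (k+1) : ZMod n)) with hg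
  obtain ⟨i, j, hne, hij⟩ := Finite.exists_ne_map_eq_of_infinite g
  wlog hlt : i < j generalizing i j
  · exact this j i hne.symm hij.symm (by omega)
  have step : ∀ a b : ℕ, g (a+1) = g (b+1) → g a = g b := by
    intro a b h
    have h1 : (Nat.fib (a+1) : ZMod n) = Nat.fib (b+1) := congrArg Prod.fst h
    have h2 : (Nat.fib (a+2) : ZMod n) = Nat.fib (b+2) := congrArg Prod.snd h
    rw [Nat.fib_add_two, Nat.fib_add_two] at h2
    push_cast at h2
    have : (Nat.fib a : ZMod n) = Nat.fib b := by linear_combination h2 - h1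
    simp [hg, Prod.ext_iff, this, h1]
  have key : ∀ d, d ≤ i → g (i - d) = g (j - d) := by
    intro d hd
    induction d with
    | zero => simpa using hij
    | succ k ihk =>
      have hk' := ihk (by omega)
      have e1 : i - k = (i - (k+1)) + 1 := by omega
      have e2 : j - k = (j - (k+1)) + 1 := by omega
      rw [e1, e2] at hk'
      exact step _ _ hk'
  have h0 : g 0 = g (j - i) := by simpa using key i le_rfl
  refine ⟨j - i, by omega, ?_⟩
  have : (Nat.fib (j - i) : ZMod n) = 0 := by
    have := congrArg Prod.fst h0.symm
    simpa [hg] using this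
  exact (ZMod.natCast_eq_zero_iff _ _).1 this

lemma fibZ_mem (n : ℕ) (hn : 0 < n) : 0 < fibZ n ∧ n ∣ Nat.fib (fibZ n) := by
  have h := exists_fib_dvd n hn
  have : {m | 0 < m ∧ n ∣ Nat.fib m}.Nonempty := by
    obtain ⟨m, hm⟩ := h; exact ⟨m, hm⟩
  exact Nat.sInf_mem this

lemma fibZ_dvd_of (n m : ℕ) (hn : 0 < n) (hm : 0 < m) (h : n ∣ Nat.fib m) : fibZ n ∣ m := by
  obtain ⟨hz, hdvd⟩ := fibZ_mem n hn
  have hd : n ∣ Nat.fib (Nat.gcd (fibZ n) m) := by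
    rw [Nat.fib_gcd]; exact Nat.dvd_gcd hdvd h
  have hdpos : 0 < Nat.gcd (fibZ n) m := Nat.gcd_pos_of_pos_left _ hz
  have hle : fibZ n ≤ Nat.gcd (fibZ n) m := Nat.sInf_le ⟨hdpos, hd⟩
  have hge : Nat.gcd (fibZ n) m ∣ fibZ n := Nat.gcd_dvd_left _ _
  have heq : Nat.gcd (fibZ n) m = fibZ n :=
    Nat.le_antisymm (Nat.le_of_dvd hz hge) hle
  rw [← heq]; exact Nat.gcd_dvd_right _ _


lemma dvd_fib_of_fibZ_dvd {n m : ℕ} (hn : 0 < n) (h : fibZ n ∣ m) : n ∣ Nat.fib m :=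
  (fibZ_mem n hn).2.trans (Nat.fib_dvd _ _ h)

lemma fibZ_one_dvd (m : ℕ) (hm : 0 < m) : fibZ 1 ∣ m :=
  fibZ_dvd_of 1 m one_pos hm (one_dvd _)

lemma fibZ_coprime_dvd {a b : ℕ} (ha : 0 < a) (hb : 0 < b) (hab : Nat.Coprime a b) :
    fibZ (a * b) ∣ Nat.lcm (fibZ a) (fibZ b) := by
  have hL : 0 < Nat.lcm (fibZ a) (fibZ b) :=
    Nat.pos_of_ne_zero (Nat.lcm_ne_zero (fibZ_mem a ha).1.ne' (fibZ_mem b hb).1.ne')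
  refine fibZ_dvd_of _ _ (Nat.mul_pos ha hb) hL (hab.mul_dvd_of_dvd_of_dvd ?_ ?_)
  · exact dvd_fib_of_fibZ_dvd ha (Nat.dvd_lcm_left _ _)
  · exact dvd_fib_of_fibZ_dvd hb (Nat.dvd_lcm_right _ _)

section Ring
variable {R : Type*} [CommRing R]

lemma alpha_pow {α : R} (hα : α ^ 2 = α + 1) (m : ℕ) :
    α ^ (m + 1) = (Nat.fib (m + 1) : R) * α + (Nat.fib m : R) := by
  induction m with
  | zero => simp
  | succ k ih =>
    have : α ^ (k + 2) = α ^ (k+1) * α := by ring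
    rw [this, ih, Nat.fib_add_two]
    push_cast
    linear_combination ((Nat.fib (k+1) : R)) * hα

lemma binet {r : R} (hr : r ^ 2 = r + 1) (m : ℕ) :
    (r - (1 - r)) * (Nat.fib m : R) = r ^ m - (1 - r) ^ m := by
  have hs : (1 - r) ^ 2 = (1 - r) + 1 := by linear_combination hr
  induction m using Nat.twoStepInduction with
  | zero => simp
  | one => simp
  | more k ih1 ih2 =>
    rw [Nat.fib_add_two]
    push_cast
    have e1 : r ^ (k + 2) = r ^ (k+1) + r ^ k := by
      have : r ^ (k+2) = r ^ k * r ^ 2 := by ring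
      rw [this, hr]; ring
    have e2 : (1-r) ^ (k + 2) = (1-r) ^ (k+1) + (1-r) ^ k := by
      have : (1-r) ^ (k+2) = (1-r) ^ k * (1-r) ^ 2 := by ring
      rw [this, hs]; ring
    rw [e1, e2]
    linear_combination ih1 + ih2

lemma two_mul_root_ne_one {r : R} (hr : r ^ 2 = r + 1) (h5 : (5 : R) ≠ 0) : 2 * r ≠ 1 := by
  intro h
  apply h5
  linear_combination (-4 : R) * hr + (2*r - 1) * h
end Ring

lemma five_ne_zero_zmod {p : ℕ} (hp : p.Prime) (h5 : p ≠ 5) : (5 : ZMod p) ≠ 0 := by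
  intro h
  have : (p : ℕ) ∣ 5 := by
    have := (ZMod.natCast_eq_zero_iff 5 p).1 (by exact_mod_cast h)
    exact this
  exact h5 ((Nat.prime_dvd_prime_iff_eq hp (by norm_num)).1 this)

lemma apparition_split {p : ℕ} (hp : p.Prime) (h5 : p ≠ 5) {r : ZMod p}
    (hr : r ^ 2 = r + 1) : p ∣ Nat.fib (p - 1) := by
  haveI : Fact p.Prime := ⟨hp⟩
  have hr0 : r ≠ 0 := by
    intro h
    have h1 : (1 : ZMod p) = 0 := by rw [h] at hr; linear_combination -hr
    exact one_ne_zero h1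
  have hs0 : (1 : ZMod p) - r ≠ 0 := by
    intro h
    have h1 : (1 : ZMod p) = 0 := by linear_combination -hr - r * h
    exact one_ne_zero h1
  have hdiff : r - (1 - r) ≠ 0 := by
    intro h
    exact two_mul_root_ne_one hr (five_ne_zero_zmod hp h5) (by linear_combination h)
  have hb := binet hr (p - 1)
  rw [ZMod.pow_card_sub_one_eq_one hr0, ZMod.pow_card_sub_one_eq_one hs0] at hb
  have : (Nat.fib (p-1) : ZMod p) = 0 := by
    have := mul_eq_zero.1 (by rw [hb]; ring : (r - (1-r)) * (Nat.fib (p-1) : ZMod p) = 0)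
    tauto
  exact (ZMod.natCast_eq_zero_iff _ _).1 this

open Polynomial


lemma apparition_nonsplit {p : ℕ} (hp : p.Prime)
    (hns : ∀ r : ZMod p, r ^ 2 ≠ r + 1) : p ∣ Nat.fib (p + 1) := by
  haveI : Fact p.Prime := ⟨hp⟩
  have h5 : p ≠ 5 := by
    rintro rfl
    have h5' : ((5 : ℕ) : ZMod 5) = 0 := ZMod.natCast_self 5
    push_cast at h5'
    exact hns 3 (by linear_combination h5')
  set f : (ZMod p)[X] := X ^ 2 - X - 1 with hf
  have hfdeg : f.natDegree = 2 := by
    rw [hf]; compute_degree!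
  have hfirr : Irreducible f := by
    rw [irreducible_iff_roots_eq_zero_of_degree_le_three (by omega) (by omega)]
    rw [Multiset.eq_zero_iff_forall_notMem]
    intro a ha
    have hf0 : f ≠ 0 := by
      intro h; rw [h] at hfdeg; simp at hfdeg
    rw [mem_roots hf0] at ha
    have heval : eval a f = 0 := ha
    rw [hf] at heval
    simp only [eval_sub, eval_pow, eval_X, eval_one] at heval
    exact hns a (by linear_combination heval)
  haveI : Fact (Irreducible f) := ⟨hfirr⟩
  set K := AdjoinRoot f with hK
  haveI : CharP K p := charP_of_injective_algebraMap (algebraMap (ZMod p) K).injective p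
  set α : K := AdjoinRoot.root f with hαdef
  have hα : α ^ 2 = α + 1 := by
    have h0 : eval₂ (AdjoinRoot.of f) α (X ^ 2 - X - 1) = 0 := AdjoinRoot.eval₂_root f
    simp only [eval₂_sub, eval₂_pow, eval₂_X, eval₂_one] at h0
    linear_combination h0
  have hinj : Function.Injective (algebraMap (ZMod p) K) := (algebraMap (ZMod p) K).injective
  have hni : ∀ c : ZMod p, algebraMap (ZMod p) K c ≠ α := by
    intro c hc
    apply hns c
    apply hinj
    rw [map_add, map_pow, map_one, hc, hα]
  have hne5 : (5 : K) ≠ 0 := by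
    intro h
    apply five_ne_zero_zmod hp h5
    apply hinj
    rw [map_zero, map_ofNat]
    exact h
  -- Frobenius
  have hγ : (α ^ p) ^ 2 = α ^ p + 1 := by
    have h1 : (α ^ p) ^ 2 = (α ^ 2) ^ p := by ring
    rw [h1, hα, add_pow_char, one_pow]
  have hdichot : α ^ p = α ∨ α ^ p = 1 - α := by
    have : (α ^ p - α) * (α ^ p - (1 - α)) = 0 := by
      linear_combination hγ - hα
    rcases mul_eq_zero.1 this with h | h
    · left; linear_combination h
    · right; linear_combination h
  have hfrob : α ^ p = 1 - α := by
    rcases hdichot with h | h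
    · exfalso
      -- too many roots of X^p - X
      set g : K[X] := X ^ p - X with hg
      have hp2 : 2 ≤ p := hp.two_le
      have hgdeg : g.natDegree = p := by
        rw [hg]; compute_degree!
        · rw [if_neg (by omega)]; norm_num
        · omega
      have hg0 : g ≠ 0 := by
        intro h0; rw [h0] at hgdeg; simp at hgdeg; omega
      set s : Finset K := insert α (Finset.univ.image (fun c : ZMod p => algebraMap (ZMod p) K c)) with hs
      have hcard : s.card = p + 1 := by
        rw [hs, Finset.card_insert_of_notMem, Finset.card_image_of_injective _ hinj]
        · simp [ZMod.card]
        · simp only [Finset.mem_image]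
          rintro ⟨c, -, hc⟩
          exact hni c hc
      have hsub : s ⊆ g.roots.toFinset := by
        intro x hx
        rw [Multiset.mem_toFinset, mem_roots hg0]
        rw [hs] at hx
        rcases Finset.mem_insert.1 hx with rfl | hx
        · show eval α (X ^ p - X) = 0
          simp [h]
        · obtain ⟨c, -, rfl⟩ := Finset.mem_image.1 hx
          show eval _ (X ^ p - X) = 0
          simp only [eval_sub, eval_pow, eval_X]
          rw [← map_pow, ZMod.pow_card]
          ring
      have := Finset.card_le_card hsub
      have h1 : g.roots.toFinset.card ≤ Multiset.card g.roots := Multiset.toFinset_card_le _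
      have h2 : Multiset.card g.roots ≤ g.natDegree := Polynomial.card_roots' g
      omega
    · exact h
  -- now α ^ p = 1 - α
  have hβp : (1 - α) ^ p = α := by
    have : (1 - α) ^ p = 1 - α ^ p := by
      rw [sub_pow_char]
      simp
    rw [this, hfrob]; ring
  have hfin : (α - (1 - α)) * (Nat.fib (p+1) : K) = 0 := by
    rw [binet hα (p+1)]
    have e1 : α ^ (p+1) = α ^ p * α := by ring
    have e2 : (1-α) ^ (p+1) = (1-α) ^ p * (1-α) := by ring
    rw [e1, e2, hfrob, hβp]
    ring
  have hdne : α - (1 - α) ≠ 0 := by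
    intro h
    exact two_mul_root_ne_one hα hne5 (by linear_combination h)
  have hz : (Nat.fib (p+1) : K) = 0 := by
    rcases mul_eq_zero.1 hfin with h | h
    · exact absurd h hdne
    · exact h
  have : (Nat.fib (p+1) : ZMod p) = 0 := by
    apply hinj
    rw [map_natCast, map_zero]
    exact hz
  exact (ZMod.natCast_eq_zero_iff _ _).1 this

lemma adjoin_coord {R : Type*} [CommRing R] {g : R[X]} (hg : g.Monic) (hdeg : g.natDegree = 2)
    (a b c d : R)
    (h : algebraMap R (AdjoinRoot g) a * AdjoinRoot.root g + algebraMap R (AdjoinRoot g) b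
       = algebraMap R (AdjoinRoot g) c * AdjoinRoot.root g + algebraMap R (AdjoinRoot g) d) :
    a = c := by
  set pb := AdjoinRoot.powerBasis' hg with hpb
  have hdim : pb.dim = 2 := hdeg
  set i0 : Fin pb.dim := ⟨0, by omega⟩ with hi0
  set i1 : Fin pb.dim := ⟨1, by omega⟩ with hi1
  have hb0 : pb.basis i0 = 1 := by rw [PowerBasis.coe_basis]; simp [hi0]
  have hb1 : pb.basis i1 = AdjoinRoot.root g := by
    rw [PowerBasis.coe_basis]
    simp [hi1, hpb]
  have hform : ∀ x y : R,
      algebraMap R (AdjoinRoot g) x * AdjoinRoot.root g + algebraMap R (AdjoinRoot g) y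
      = x • pb.basis i1 + y • pb.basis i0 := by
    intro x y
    rw [hb0, hb1, Algebra.smul_def, Algebra.smul_def, mul_one]
  rw [hform, hform] at h
  have hne : i0 ≠ i1 := by
    intro hcontra
    rw [hi0, hi1] at hcontra
    exact absurd (congrArg Fin.val hcontra) (by simp)
  have key : ∀ x y : R, (pb.basis.repr (x • pb.basis i1 + y • pb.basis i0)) i1 = x := by
    intro x y
    rw [map_add, map_smul, map_smul, Module.Basis.repr_self, Module.Basis.repr_self]
    rw [Finsupp.add_apply, Finsupp.smul_apply, Finsupp.smul_apply,
      Finsupp.single_eq_same, Finsupp.single_eq_of_ne' hne]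
    simp
  have := congrArg (fun z => (pb.basis.repr z) i1) h
  rw [key, key] at this
  exact this

lemma fib_lift {p : ℕ} (hp : p.Prime) {k m : ℕ} (hk : 1 ≤ k)
    (h : p ^ k ∣ Nat.fib m) : p ^ (k + 1) ∣ Nat.fib (p * m) := by
  rcases Nat.eq_zero_or_pos m with rfl | hm
  · simp
  obtain ⟨m', rfl⟩ : ∃ m', m = m' + 1 := ⟨m - 1, by omega⟩
  have hp1 : 1 < p := hp.one_lt
  haveI : Fact (1 < p ^ (k + 1)) := ⟨by
    calc 1 < p := hp1
    _ = p ^ 1 := (pow_one p).symm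
    _ ≤ p ^ (k+1) := Nat.pow_le_pow_right (by omega) (by omega)⟩
  set R : Type := ZMod (p ^ (k+1)) with hR
  set g : R[X] := X ^ 2 - X - 1 with hg
  have hmonic : g.Monic := by rw [hg]; monicity!
  have hdeg : g.natDegree = 2 := by rw [hg]; compute_degree!
  set A := AdjoinRoot g with hA
  set α : A := AdjoinRoot.root g with hα'
  have hα : α ^ 2 = α + 1 := by
    have h0 : eval₂ (AdjoinRoot.of g) α (X ^ 2 - X - 1) = 0 := AdjoinRoot.eval₂_root g
    simp only [eval₂_sub, eval₂_pow, eval₂_X, eval₂_one] at h0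
    linear_combination h0
  obtain ⟨c, hc⟩ := h
  have hpN : ((p : A)) ^ (k + 1) = 0 := by
    have h1 : ((p ^ (k+1) : ℕ) : R) = 0 := ZMod.natCast_self _
    have h2 : ((p ^ (k+1) : ℕ) : A) = algebraMap R A ((p ^ (k+1) : ℕ) : R) := (map_natCast _ _).symm
    rw [h1, map_zero] at h2
    calc ((p : A)) ^ (k+1) = ((p ^ (k+1) : ℕ) : A) := by push_cast; ring
    _ = 0 := h2
  -- expansion of α ^ (p * (m' + 1))
  have e1 : α ^ (m' + 1) = (Nat.fib (m' + 1) : A) * α + (Nat.fib m' : A) := alpha_pow hα m'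
  have e2 : α ^ (p * (m' + 1)) = ((Nat.fib (m' + 1) : A) * α + (Nat.fib m' : A)) ^ p := by
    rw [← e1, ← pow_mul, mul_comm p (m' + 1), pow_mul]
  have e3 : ((Nat.fib (m' + 1) : A) * α + (Nat.fib m' : A)) ^ p = (Nat.fib m' : A) ^ p := by
    rw [add_pow]
    rw [Finset.sum_eq_single 0]
    · simp
    · intro i hi hine
      have hFA : (Nat.fib (m' + 1) : A) = (p : A) ^ k * (c : A) := by
        rw [hc, Nat.cast_mul, Nat.cast_pow]
      rcases eq_or_lt_of_le (Nat.one_le_iff_ne_zero.2 hine) with h1 | h2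
      · -- i = 1
        rw [← h1]
        rw [hFA]
        have : Nat.choose p 1 = p := by simp
        rw [this]
        have hre : ((p:A)^k * (c:A) * α) ^ 1 * (Nat.fib m' : A) ^ (p - 1) * (p : A)
            = (p:A)^(k+1) * ((c:A) * α * (Nat.fib m' : A)^(p-1)) := by ring
        rw [hre, hpN, zero_mul]
      · -- 2 ≤ i
        rw [hFA]
        have hki : k + 1 ≤ k * i := by nlinarith
        obtain ⟨j, hj⟩ : ∃ j, k * i = (k+1) + j := ⟨k * i - (k+1), by omega⟩
        have h1 : ((p:A) ^ k) ^ i = 0 := by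
          rw [← pow_mul, hj, pow_add, hpN, zero_mul]
        have hfinal : ((p:A)^k * (c:A) * α) ^ i * (Nat.fib m' : A) ^ (p - i) * ((p.choose i : ℕ) : A)
            = ((p:A)^k) ^ i * ((c:A) ^ i * α ^ i * (Nat.fib m' : A) ^ (p - i) * ((p.choose i : ℕ) : A)) := by
          ring
        rw [hfinal, h1, zero_mul]
    · intro hni
      simp at hni
  -- other representation
  have hprodpos : 1 ≤ p * (m' + 1) := Nat.mul_pos (by omega) (by omega)
  obtain ⟨M, hM⟩ : ∃ M, p * (m' + 1) = M + 1 := ⟨p * (m' + 1) - 1, by omega⟩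
  have e4 : α ^ (M + 1) = (Nat.fib (M + 1) : A) * α + (Nat.fib M : A) := alpha_pow hα M
  have e5 : (Nat.fib (M + 1) : A) * α + (Nat.fib M : A) = (Nat.fib m' : A) ^ p := by
    rw [← e4, ← hM, e2, e3]
  have e6 : algebraMap R A ((Nat.fib (M + 1) : R)) * α + algebraMap R A ((Nat.fib M : R))
      = algebraMap R A 0 * α + algebraMap R A ((Nat.fib m' : R) ^ p) := by
    rw [map_natCast, map_natCast, map_zero, zero_mul, zero_add, map_pow, map_natCast]
    exact e5
  have e7 : (Nat.fib (M + 1) : R) = 0 := adjoin_coord hmonic hdeg _ _ _ _ e6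
  rw [← hM] at e7
  exact (ZMod.natCast_eq_zero_iff _ _).1 e7

lemma prime_pow_dvd_fib {p : ℕ} (hp : p.Prime) (e : ℕ) (he : 1 ≤ e) :
    p ^ e ∣ Nat.fib (p ^ (e - 1) * fibZ p) := by
  induction e with
  | zero => omega
  | succ d ih =>
    rcases Nat.eq_zero_or_pos d with rfl | hd
    · simpa using (fibZ_mem p hp.pos).2
    · have hstep := fib_lift hp (k := d) (m := p ^ (d-1) * fibZ p) hd (ih hd)
      have : p * (p ^ (d - 1) * fibZ p) = p ^ (d + 1 - 1) * fibZ p := by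
        rw [← mul_assoc]
        congr 1
        rw [Nat.succ_sub_one]
        rw [← pow_succ']
        congr 1
        omega
      rwa [this] at hstep

lemma fibZ_prime_pow {p : ℕ} (hp : p.Prime) (e : ℕ) (he : 1 ≤ e) :
    fibZ (p ^ e) ∣ p ^ (e - 1) * fibZ p := by
  apply fibZ_dvd_of _ _ (Nat.pow_pos hp.pos)
  · exact Nat.mul_pos (Nat.pow_pos hp.pos) (fibZ_mem p hp.pos).1
  · exact prime_pow_dvd_fib hp e he

lemma fibZ_two : fibZ 2 ∣ 3 := fibZ_dvd_of 2 3 (by norm_num) (by norm_num) (by norm_num)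

lemma fibZ_five : fibZ 5 ∣ 5 := fibZ_dvd_of 5 5 (by norm_num) (by norm_num) (by norm_num)

lemma fibZ_apparition {p : ℕ} (hp : p.Prime) (h2 : p ≠ 2) (h5 : p ≠ 5) :
    ∃ w, 0 < w ∧ fibZ p ∣ 2 * w ∧ 2 * w ≤ p + 1 ∧ 3 * w ≤ 2 * p := by
  have hp3 : 3 ≤ p := by
    have := hp.two_le
    omega
  have hodd : p % 2 = 1 := Nat.odd_iff.1 (hp.odd_of_ne_two h2)
  by_cases hsplit : ∃ r : ZMod p, r ^ 2 = r + 1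
  · obtain ⟨r, hr⟩ := hsplit
    have hdvd := apparition_split hp h5 hr
    have hz : fibZ p ∣ p - 1 := fibZ_dvd_of p (p-1) hp.pos (by omega) hdvd
    refine ⟨(p - 1) / 2, by omega, ?_, by omega, by omega⟩
    have : 2 * ((p - 1) / 2) = p - 1 := by omega
    rw [this]
    exact hz
  · push_neg at hsplit
    have hdvd := apparition_nonsplit hp hsplit
    have hz : fibZ p ∣ p + 1 := fibZ_dvd_of p (p+1) hp.pos (by omega) hdvd
    refine ⟨(p + 1) / 2, by omega, ?_, by omega, by omega⟩
    have : 2 * ((p + 1) / 2) = p + 1 := by omega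
    rw [this]
    exact hz

lemma fibZ_five_pow (b : ℕ) : fibZ (5 ^ b) ∣ 5 ^ b := by
  rcases Nat.eq_zero_or_pos b with rfl | hb
  · simpa using fibZ_one_dvd 1 one_pos
  · calc fibZ (5 ^ b) ∣ 5 ^ (b - 1) * fibZ 5 := fibZ_prime_pow (by norm_num) b hb
    _ ∣ 5 ^ (b - 1) * 5 := Nat.mul_dvd_mul_left _ fibZ_five
    _ = 5 ^ b := by rw [← pow_succ]; congr 1; omega

lemma fibZ_two_pow (a : ℕ) (ha : 1 ≤ a) : fibZ (2 ^ a) ∣ 3 * 2 ^ (a - 1) := by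
  calc fibZ (2 ^ a) ∣ 2 ^ (a - 1) * fibZ 2 := fibZ_prime_pow (by norm_num) a ha
  _ ∣ 2 ^ (a - 1) * 3 := Nat.mul_dvd_mul_left _ fibZ_two
  _ = 3 * 2 ^ (a - 1) := by ring

lemma S_induction : ∀ m : ℕ, 0 < m → ¬ 2 ∣ m → ¬ 5 ∣ m →
    ∃ u v, 0 < u ∧ 0 < v ∧ u ∣ m ∧ fibZ m ∣ 2 * (u * v) ∧ v ≤ m ∧ (m ≠ 1 → 3 * v ≤ 2 * m) := by
  intro m
  induction m using Nat.strong_induction_on with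
  | _ m ih =>
    intro hm h2 h5
    rcases eq_or_ne m 1 with rfl | hm1
    · exact ⟨1, 1, one_pos, one_pos, dvd_refl 1, fibZ_one_dvd 2 (by norm_num), le_refl 1,
        fun h => absurd rfl h⟩
    -- m > 1
    set p := m.minFac with hpdef
    have hp : p.Prime := Nat.minFac_prime hm1
    have hpm : p ∣ m := Nat.minFac_dvd m
    have hp2 : p ≠ 2 := by intro h; rw [h] at hpm; exact h2 hpm
    have hp5 : p ≠ 5 := by intro h; rw [h] at hpm; exact h5 hpm
    set e := m.factorization p with hedef
    have he : 1 ≤ e := (Nat.Prime.factorization_pos_of_dvd hp hm.ne' hpm)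
    set q := p ^ e with hqdef
    set m' := m / p ^ e with hm'def
    have hqm' : q * m' = m := Nat.ordProj_mul_ordCompl_eq_self m p
    have hpm' : ¬ p ∣ m' := Nat.not_dvd_ordCompl hp hm.ne'
    have hm'pos : 0 < m' := Nat.ordCompl_pos p hm.ne'
    have hcop : Nat.Coprime q m' := Nat.Coprime.pow_left _ ((Nat.Prime.coprime_iff_not_dvd hp).2 hpm')
    have hqpos : 0 < q := Nat.pow_pos hp.pos
    have hq1 : 1 < q := by
      have : 2 ≤ p := hp.two_le
      calc 1 < p := by omega
      _ = p ^ 1 := (pow_one _).symm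
      _ ≤ p ^ e := Nat.pow_le_pow_right hp.pos he
    have hm'dvd : m' ∣ m := ⟨q, by rw [← hqm']; ring⟩
    have hm'lt : m' < m := by
      rcases Nat.lt_or_ge m' m with h | h
      · exact h
      · exfalso
        nlinarith [hqm']
    have h2m' : ¬ 2 ∣ m' := fun h => h2 (h.trans hm'dvd)
    have h5m' : ¬ 5 ∣ m' := fun h => h5 (h.trans hm'dvd)
    obtain ⟨u', v', hu'pos, hv'pos, hu'dvd, hz', hv'le, hv'ineq⟩ := ih m' hm'lt hm'pos h2m' h5m'
    obtain ⟨w, hwpos, hzw, hw1, hw2⟩ := fibZ_apparition hp hp2 hp5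
    have hzq : fibZ q ∣ p ^ (e - 1) * (2 * w) :=
      (fibZ_prime_pow hp e he).trans (Nat.mul_dvd_mul_left _ hzw)
    -- combine
    set u := p ^ (e - 1) * u' with hudef
    set v := w * v' with hvdef
    have hupos : 0 < u := Nat.mul_pos (Nat.pow_pos hp.pos) hu'pos
    have hvpos : 0 < v := Nat.mul_pos hwpos hv'pos
    have hudvd : u ∣ m := by
      rw [← hqm', hudef]
      exact mul_dvd_mul (pow_dvd_pow p (by omega)) hu'dvd
    have hzm : fibZ m ∣ 2 * (u * v) := by
      have h1 : fibZ m ∣ Nat.lcm (fibZ q) (fibZ m') := by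
        rw [← hqm']
        exact fibZ_coprime_dvd hqpos hm'pos hcop
      refine h1.trans (Nat.lcm_dvd ?_ ?_)
      · refine hzq.trans ⟨u' * v', by rw [hudef, hvdef]; ring⟩
      · refine hz'.trans ⟨p ^ (e - 1) * w, by rw [hudef, hvdef]; ring⟩
    have hwp : w ≤ p := by
      have := hp.two_le
      omega
    have hpq : p ≤ q := by
      calc p = p ^ 1 := (pow_one _).symm
      _ ≤ p ^ e := Nat.pow_le_pow_right hp.pos he
    have hvle : v ≤ m := by
      rw [← hqm', hvdef]
      exact Nat.mul_le_mul (hwp.trans hpq) hv'le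
    refine ⟨u, v, hupos, hvpos, hudvd, hzm, hvle, fun _ => ?_⟩
    rcases eq_or_ne m' 1 with hm'1 | hm'1
    · have hv'1 : v' = 1 := by omega
      rw [hvdef, hv'1, mul_one, ← hqm', hm'1, mul_one]
      calc 3 * w ≤ 2 * p := hw2
      _ ≤ 2 * q := by omega
    · have h3v' : 3 * v' ≤ 2 * m' := hv'ineq hm'1
      calc 3 * v = w * (3 * v') := by rw [hvdef]; ring
      _ ≤ q * (2 * m') := Nat.mul_le_mul (hwp.trans hpq) h3v'
      _ = 2 * m := by rw [← hqm']; ring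

theorem ell_le_two_mul_sq (n : ℕ) (hn : 0 < n) : ellF n ≤ 2 * n ^ 2 := by
  set a := n.factorization 2 with hadef
  set A := 2 ^ a with hAdef
  set n₁ := n / 2 ^ a with hn₁def
  have hAn₁ : A * n₁ = n := Nat.ordProj_mul_ordCompl_eq_self n 2
  have h2n₁ : ¬ 2 ∣ n₁ := Nat.not_dvd_ordCompl Nat.prime_two hn.ne'
  have hn₁pos : 0 < n₁ := Nat.ordCompl_pos 2 hn.ne'
  set b := n₁.factorization 5 with hbdef
  set B := 5 ^ b with hBdef
  set m := n₁ / 5 ^ b with hmdef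
  have hBm : B * m = n₁ := Nat.ordProj_mul_ordCompl_eq_self n₁ 5
  have h5m : ¬ 5 ∣ m := Nat.not_dvd_ordCompl (by norm_num) hn₁pos.ne'
  have hmpos : 0 < m := Nat.ordCompl_pos 5 hn₁pos.ne'
  have hmdvd : m ∣ n₁ := ⟨B, by rw [← hBm]; ring⟩
  have h2m : ¬ 2 ∣ m := fun h => h2n₁ (h.trans hmdvd)
  have hApos : 0 < A := Nat.pow_pos (by norm_num)
  have hBpos : 0 < B := Nat.pow_pos (by norm_num)
  have hcopA : Nat.Coprime A n₁ :=
    Nat.Coprime.pow_left _ ((Nat.Prime.coprime_iff_not_dvd Nat.prime_two).2 h2n₁)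
  have hcopB : Nat.Coprime B m :=
    Nat.Coprime.pow_left _ ((Nat.Prime.coprime_iff_not_dvd (by norm_num)).2 h5m)
  obtain ⟨u, v, hupos, hvpos, hudvd, hzm, hvle, hvineq⟩ := S_induction m hmpos h2m h5m
  have hzB : fibZ B ∣ B := fibZ_five_pow b
  have hzn : fibZ n ∣ Nat.lcm (fibZ A) (Nat.lcm (fibZ B) (fibZ m)) := by
    have h1 : fibZ n ∣ Nat.lcm (fibZ A) (fibZ n₁) := by
      rw [← hAn₁]; exact fibZ_coprime_dvd hApos hn₁pos hcopA
    refine h1.trans (Nat.lcm_dvd (Nat.dvd_lcm_left _ _) ?_)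
    have h2' : fibZ n₁ ∣ Nat.lcm (fibZ B) (fibZ m) := by
      rw [← hBm]; exact fibZ_coprime_dvd hBpos hmpos hcopB
    exact h2'.trans (Nat.dvd_lcm_right _ _)
  have main : ∀ t K : ℕ, Nat.lcm (fibZ A) (Nat.lcm (fibZ B) (fibZ m)) ∣ K → K ∣ n * t →
      0 < t → t ≤ 2 * n → ellF n ≤ 2 * n ^ 2 := by
    intro t K h1 h2 ht ht2
    have hd : ellF n ∣ n * t := Nat.lcm_dvd (Dvd.intro t rfl) ((hzn.trans h1).trans h2)
    have hle : ellF n ≤ n * t := Nat.le_of_dvd (Nat.mul_pos hn ht) hd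
    calc ellF n ≤ n * t := hle
    _ ≤ n * (2 * n) := Nat.mul_le_mul_left n ht2
    _ = 2 * n ^ 2 := by ring
  rcases Nat.eq_zero_or_pos a with ha0 | ha1
  · -- a = 0 : n odd
    have hA1 : A = 1 := by rw [hAdef, ha0, pow_zero]
    have hn_eq : n = B * m := by rw [← hAn₁, hA1, one_mul, ← hBm]
    have hKpos : 0 < (B * u) * (2 * v) :=
      Nat.mul_pos (Nat.mul_pos hBpos hupos) (Nat.mul_pos (by norm_num) hvpos)
    refine main (2 * v) ((B * u) * (2 * v)) (Nat.lcm_dvd ?_ (Nat.lcm_dvd ?_ ?_)) ?_ (by omega) ?_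
    · rw [hA1]; exact fibZ_one_dvd _ hKpos
    · exact hzB.trans ⟨u * (2 * v), by ring⟩
    · exact hzm.trans ⟨B, by ring⟩
    · exact Nat.mul_dvd_mul (by rw [hn_eq]; exact Nat.mul_dvd_mul_left B hudvd) (dvd_refl _)
    · -- 2 * v ≤ 2 * n
      have : v ≤ n := by
        calc v ≤ m := hvle
        _ ≤ n := Nat.le_of_dvd hn (by rw [hn_eq]; exact ⟨B, by ring⟩)
      omega
  · -- a ≥ 1 : n even
    have hzA : fibZ A ∣ 3 * 2 ^ (a - 1) := fibZ_two_pow a ha1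
    have hn2 : 2 ≤ n := by
      have h2A : 2 ≤ A := by
        calc 2 = 2 ^ 1 := (pow_one 2).symm
        _ ≤ 2 ^ a := Nat.pow_le_pow_right (by norm_num) ha1
      calc 2 ≤ A := h2A
      _ = A * 1 := (mul_one A).symm
      _ ≤ A * n₁ := Nat.mul_le_mul_left A hn₁pos
      _ = n := hAn₁
    have h2a : 2 ^ (a - 1) * 2 = A := by
      rw [hAdef, ← pow_succ]
      congr 1
      omega
    have hn_eq : n = A * (B * m) := by rw [← hAn₁, ← hBm]
    rcases eq_or_ne m 1 with hm1 | hm1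
    · -- n = A * B
      have hKpos : 0 < (2 ^ (a - 1) * B) * 3 := by positivity
      refine main 3 ((2 ^ (a - 1) * B) * 3) (Nat.lcm_dvd ?_ (Nat.lcm_dvd ?_ ?_)) ?_ (by norm_num) (by omega)
      · exact hzA.trans ⟨B, by ring⟩
      · exact hzB.trans ⟨2 ^ (a - 1) * 3, by ring⟩
      · rw [hm1]; exact fibZ_one_dvd _ hKpos
      · refine Nat.mul_dvd_mul ?_ (dvd_refl 3)
        rw [hn_eq, hm1, mul_one, ← h2a]
        exact ⟨2, by ring⟩
    · -- m > 1
      have h3v : 3 * v ≤ 2 * m := hvineq hm1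
      refine main (6 * v) ((2 ^ (a - 1) * (B * u)) * (6 * v)) (Nat.lcm_dvd ?_ (Nat.lcm_dvd ?_ ?_)) ?_ (by omega) ?_
      · exact hzA.trans ⟨B * u * (2 * v), by ring⟩
      · exact hzB.trans ⟨2 ^ (a - 1) * u * (6 * v), by ring⟩
      · exact hzm.trans ⟨2 ^ (a - 1) * B * 3, by ring⟩
      · refine Nat.mul_dvd_mul ?_ (dvd_refl _)
        rw [hn_eq, ← h2a]
        obtain ⟨mu, hmu⟩ := hudvd
        exact ⟨2 * mu, by rw [hmu]; ring⟩
      · -- 6 * v ≤ 2 * n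
        have h2A : 2 ≤ A := by
          calc 2 = 2 ^ 1 := (pow_one 2).symm
          _ ≤ 2 ^ a := Nat.pow_le_pow_right (by norm_num) ha1
        have s1 : 2 * m ≤ 2 * (B * m) := by
          have : 1 * m ≤ B * m := Nat.mul_le_mul_right m hBpos
          omega
        have s2 : 2 * (B * m) ≤ A * (B * m) := Nat.mul_le_mul_right _ h2A
        have h2mn : 2 * m ≤ n := by
          rw [hn_eq]
          omega
        omega
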